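/- arXiv:1402.3921 — 3 statements merged into one kernel-verified Lean document; each statement's English description precedes it below -/
import Mathlib

section
/- Under SRSWOR of size n from a population of size N ≥ 3, the third central moment of the sample mean satisfies E((ȳ − Ȳ)³) = ((N−n)(N−2n))/((N−1)(N−2)n²) · μ₃, where μ₃ = (1/N)∑_{i=1}^N (y_i − Ȳ)³. -/
open Finset

private lemma srswor_aux_count {α : Type*} [DecidableEq α] [Fintype α] (n : ℕ) (t : Finset α)
    (h : t.card ≤ n) :
    (((univ : Finset α).powersetCard n).filter (fun S => t ⊆ S)).card
      = (Fintype.card α - t.card).choose (n - t.card) := by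
  rw [← Finset.card_compl t, ← card_powersetCard (n - t.card) tᶜ]
  apply Finset.card_bij' (fun S _ => S \ t) (fun u _ => u ∪ t)
  · intro S hS
    simp only [mem_filter, mem_powersetCard] at hS ⊢
    constructor
    · intro x hx
      simp only [mem_sdiff] at hx
      simpa using hx.2
    · rw [Finset.card_sdiff_of_subset hS.2, hS.1.2]
  · intro u hu
    simp only [mem_powersetCard, mem_filter] at hu ⊢
    refine ⟨⟨Finset.subset_univ _, ?_⟩, Finset.subset_union_right⟩
    have hd : Disjoint u t := Finset.disjoint_left.2 fun a ha hat =>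
      (Finset.mem_compl.1 (hu.1 ha)) hat
    rw [Finset.card_union_of_disjoint hd, hu.2, Nat.sub_add_cancel h]
  · intro S hS
    simp only [mem_filter, mem_powersetCard] at hS
    exact Finset.sdiff_union_of_subset hS.2
  · intro u hu
    simp only [mem_powersetCard] at hu
    exact Finset.union_sdiff_cancel_right (Finset.disjoint_left.2 fun a ha hat =>
      (Finset.mem_compl.1 (hu.1 ha)) hat)

private lemma srswor_aux_count_zero {α : Type*} [DecidableEq α] [Fintype α] (n : ℕ) (t : Finset α)
    (h : n < t.card) :
    (((univ : Finset α).powersetCard n).filter (fun S => t ⊆ S)).card = 0 := by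
  rw [Finset.card_eq_zero, Finset.filter_eq_empty_iff]
  rintro S hS hts
  rw [mem_powersetCard] at hS
  have := Finset.card_le_card hts
  omega

private lemma srswor_aux_c (N n : ℕ) (hN : 3 ≤ N) (hn1 : 1 ≤ n) (i j k : Fin N) :
    ((((univ : Finset (Fin N)).powersetCard n).filter
        (fun S => i ∈ S ∧ j ∈ S ∧ k ∈ S)).card : ℝ)
      = (if 3 ≤ n then ((N - 3).choose (n - 3) : ℝ) else 0)
        + ((if 2 ≤ n then ((N - 2).choose (n - 2) : ℝ) else 0)
            - (if 3 ≤ n then ((N - 3).choose (n - 3) : ℝ) else 0))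
          * ((if i = j then (1:ℝ) else 0) + (if j = k then (1:ℝ) else 0)
              + (if i = k then (1:ℝ) else 0))
        + (((N - 1).choose (n - 1) : ℝ)
            - 3 * (if 2 ≤ n then ((N - 2).choose (n - 2) : ℝ) else 0)
            + 2 * (if 3 ≤ n then ((N - 3).choose (n - 3) : ℝ) else 0))
          * ((if i = j then (1:ℝ) else 0) * (if j = k then (1:ℝ) else 0)) := by
  have hfil : ((univ : Finset (Fin N)).powersetCard n).filter
        (fun S => i ∈ S ∧ j ∈ S ∧ k ∈ S)
      = ((univ : Finset (Fin N)).powersetCard n).filter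
        (fun S => ({i, j, k} : Finset (Fin N)) ⊆ S) :=
    Finset.filter_congr (fun S _ => by simp [Finset.insert_subset_iff])
  rw [hfil]
  by_cases hij : i = j
  · by_cases hjk : j = k
    · -- all equal
      subst hij; subst hjk
      have hset : ({i, i, i} : Finset (Fin N)) = {i} := by simp
      rw [hset]
      rw [srswor_aux_count n _ (by simpa using hn1)]
      simp only [Finset.card_singleton, Fintype.card_fin, if_pos rfl, if_true]
      norm_num
      split_ifs <;> ring
    · -- i = j, j ≠ k
      subst hij
      have hset : ({i, i, k} : Finset (Fin N)) = {i, k} := by simp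
      have hcard : ({i, k} : Finset (Fin N)).card = 2 := by
        rw [Finset.card_insert_of_notMem (by simpa using hjk), Finset.card_singleton]
      rw [hset]
      by_cases h2 : 2 ≤ n
      · rw [srswor_aux_count n _ (by rw [hcard]; exact h2)]
        simp only [hcard, Fintype.card_fin, if_pos rfl, if_neg hjk, if_pos h2, if_true]
        norm_num
      · rw [srswor_aux_count_zero n _ (by omega)]
        simp only [if_neg hjk, if_neg h2, if_neg (show ¬ 3 ≤ n by omega), if_pos rfl]
        push_cast
        ring
  · by_cases hjk : j = k
    · -- i ≠ j, j = k
      subst hjk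
      have hset : ({i, j, j} : Finset (Fin N)) = {i, j} := by simp
      have hcard : ({i, j} : Finset (Fin N)).card = 2 := by
        rw [Finset.card_insert_of_notMem (by simpa using hij), Finset.card_singleton]
      rw [hset]
      have hik : i ≠ j := hij
      by_cases h2 : 2 ≤ n
      · rw [srswor_aux_count n _ (by rw [hcard]; exact h2)]
        simp only [hcard, Fintype.card_fin, if_neg hij, if_pos rfl, if_pos h2, if_true]
        norm_num
      · rw [srswor_aux_count_zero n _ (by omega)]
        simp only [if_neg hij, if_neg h2, if_neg (show ¬ 3 ≤ n by omega), if_pos rfl]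
        push_cast
        ring
    · by_cases hik : i = k
      · -- i ≠ j, j ≠ k, i = k
        subst hik
        have hset : ({i, j, i} : Finset (Fin N)) = {i, j} := by
          ext x; simp; tauto
        have hcard : ({i, j} : Finset (Fin N)).card = 2 := by
          rw [Finset.card_insert_of_notMem (by simpa using hij), Finset.card_singleton]
        rw [hset]
        by_cases h2 : 2 ≤ n
        · rw [srswor_aux_count n _ (by rw [hcard]; exact h2)]
          simp only [hcard, Fintype.card_fin, if_neg hij, if_neg hjk, if_pos rfl, if_pos h2,
            if_true]
          norm_num
        · rw [srswor_aux_count_zero n _ (by omega)]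
          simp only [if_neg hij, if_neg hjk, if_neg h2,
            if_neg (show ¬ 3 ≤ n by omega), if_pos rfl]
          push_cast
          ring
      · -- all distinct
        have hcard : ({i, j, k} : Finset (Fin N)).card = 3 := by
          rw [Finset.card_insert_of_notMem (by simp [hij, hik]),
            Finset.card_insert_of_notMem (by simpa using hjk), Finset.card_singleton]
        by_cases h3 : 3 ≤ n
        · rw [srswor_aux_count n _ (by rw [hcard]; exact h3)]
          simp only [hcard, Fintype.card_fin, if_neg hij, if_neg hjk, if_neg hik, if_pos h3]
          ring
        · rw [srswor_aux_count_zero n _ (by omega)]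
          simp only [if_neg hij, if_neg hjk, if_neg hik, if_neg h3]
          ring

private lemma srswor_aux_cube {ι : Type*} (s : Finset ι) (f : ι → ℝ) :
    (∑ i ∈ s, f i) ^ 3 = ∑ i ∈ s, ∑ j ∈ s, ∑ k ∈ s, f i * f j * f k := by
  rw [pow_succ, pow_two, Finset.sum_mul_sum, Finset.sum_mul]
  refine Finset.sum_congr rfl fun i _ => ?_
  rw [Finset.sum_mul]
  refine Finset.sum_congr rfl fun j _ => ?_
  rw [Finset.mul_sum]

private lemma srswor_aux_eval (N : ℕ) (z : Fin N → ℝ) (hz : ∑ i, z i = 0) (A3 C B : ℝ) :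
    ∑ i, ∑ j, ∑ k, (A3 + C * ((if i = j then (1:ℝ) else 0) + (if j = k then (1:ℝ) else 0)
        + (if i = k then (1:ℝ) else 0))
        + B * ((if i = j then (1:ℝ) else 0) * (if j = k then (1:ℝ) else 0)))
        * (z i * z j * z k)
      = B * ∑ i, (z i) ^ 3 := by
  have expand : ∀ i j k : Fin N,
      (A3 + C * ((if i = j then (1:ℝ) else 0) + (if j = k then (1:ℝ) else 0)
        + (if i = k then (1:ℝ) else 0))
        + B * ((if i = j then (1:ℝ) else 0) * (if j = k then (1:ℝ) else 0)))
        * (z i * z j * z k)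
      = A3 * (z i * z j * z k)
        + C * ((if i = j then z i * z j * z k else 0))
        + C * ((if j = k then z i * z j * z k else 0))
        + C * ((if i = k then z i * z j * z k else 0))
        + B * (if i = j then (if j = k then z i * z j * z k else 0) else 0) := by
    intro i j k; split_ifs <;> ring
  simp only [expand, Finset.sum_add_distrib, ← Finset.mul_sum]
  simp only [Finset.sum_ite_irrel, Finset.sum_const_zero, Finset.sum_ite_eq, Finset.sum_ite_eq',
    mem_univ, if_true, hz, mul_zero, zero_mul, Finset.sum_const_zero, add_zero, zero_add]
  have key : ∀ f g : Fin N → ℝ, (∑ x, ∑ x1, f x * g x1) = (∑ x, f x) * ∑ x, g x :=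
    fun f g => (Finset.sum_mul_sum univ univ f g).symm
  have d1 : ∑ x, ∑ x1, z x * z x * z x1 = (∑ x, z x * z x) * ∑ x, z x := by
    rw [← key]
  have d2 : ∑ x, ∑ x1, z x * z x1 * z x1 = (∑ x, z x) * ∑ x, z x * z x := by
    rw [← key]
    exact Finset.sum_congr rfl fun x _ => Finset.sum_congr rfl fun x1 _ => by ring
  have d3 : ∑ x, ∑ x1, z x * z x1 * z x = (∑ x, z x * z x) * ∑ x, z x := by
    rw [← key]
    exact Finset.sum_congr rfl fun x _ => Finset.sum_congr rfl fun x1 _ => by ring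
  have d4 : ∑ x, z x * z x * z x = ∑ x, z x ^ 3 :=
    Finset.sum_congr rfl fun x _ => by ring
  rw [d1, d2, d3, d4, hz]
  ring

private lemma srswor_absorb (M m : ℕ) (hm : 1 ≤ m) (hM : 1 ≤ M) :
    M * (M - 1).choose (m - 1) = M.choose m * m := by
  obtain ⟨M', rfl⟩ := Nat.exists_eq_add_of_le hM
  obtain ⟨m', rfl⟩ := Nat.exists_eq_add_of_le hm
  simpa [Nat.add_comm, Nat.succ_sub_one] using Nat.add_one_mul_choose_eq M' m'

/-- Under SRSWOR of size `n` from a population of size `N ≥ 3`, the third central moment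
of the sample mean satisfies
`E((ȳ − Ȳ)³) = ((N−n)(N−2n))/((N−1)(N−2)n²) · μ₃`,
where `μ₃ = (1/N)∑ (yᵢ − Ȳ)³`. -/
theorem srswor_third_central_moment (N n : ℕ) (hN : 3 ≤ N) (hn1 : 1 ≤ n) (hnN : n ≤ N)
    (y : Fin N → ℝ) (Ybar : ℝ) (hYbar : Ybar = (∑ i, y i) / (N : ℝ)) :
    (∑ S ∈ (univ : Finset (Fin N)).powersetCard n,
        ((∑ i ∈ S, y i) / (n : ℝ) - Ybar) ^ 3) /
      (((univ : Finset (Fin N)).powersetCard n).card : ℝ)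
      = (((N : ℝ) - n) * ((N : ℝ) - 2 * n)) / ((((N : ℝ) - 1) * ((N : ℝ) - 2)) * (n : ℝ) ^ 2) *
          ((∑ i, (y i - Ybar) ^ 3) / (N : ℝ)) := by
  have hNR : (3:ℝ) ≤ (N:ℝ) := by exact_mod_cast hN
  have hN0 : (N:ℝ) ≠ 0 := by linarith
  have hn0 : (n:ℝ) ≠ 0 := by
    have : (1:ℝ) ≤ (n:ℝ) := by exact_mod_cast hn1
    linarith
  set z : Fin N → ℝ := fun i => y i - Ybar with hzdef
  have hz : ∑ i, z i = 0 := by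
    simp only [hzdef, Finset.sum_sub_distrib, Finset.sum_const, card_univ, Fintype.card_fin,
      nsmul_eq_mul, hYbar]
    field_simp
    ring
  set A1 : ℝ := ((N - 1).choose (n - 1) : ℝ) with hA1
  set A2 : ℝ := if 2 ≤ n then ((N - 2).choose (n - 2) : ℝ) else 0 with hA2
  set A3 : ℝ := if 3 ≤ n then ((N - 3).choose (n - 3) : ℝ) else 0 with hA3
  set CN : ℝ := (N.choose n : ℝ) with hCN
  -- rewrite summands
  have hP : ∀ S ∈ (univ : Finset (Fin N)).powersetCard n,
      ((∑ i ∈ S, y i) / (n : ℝ) - Ybar) ^ 3 = (∑ i ∈ S, z i) ^ 3 / (n:ℝ) ^ 3 := by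
    intro S hS
    have hcard : S.card = n := (mem_powersetCard.1 hS).2
    have hs : ∑ i ∈ S, z i = ∑ i ∈ S, y i - n * Ybar := by
      simp [hzdef, Finset.sum_sub_distrib, hcard]
    rw [hs, ← div_pow]
    congr 1
    field_simp
  -- the key combinatorial sum
  have hsum : ∑ S ∈ (univ : Finset (Fin N)).powersetCard n, (∑ i ∈ S, z i) ^ 3
      = (A1 - 3 * A2 + 2 * A3) * ∑ i, z i ^ 3 := by
    have e1 : ∀ S ∈ (univ : Finset (Fin N)).powersetCard n,
        (∑ i ∈ S, z i) ^ 3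
          = ∑ i, ∑ j, ∑ k, (if i ∈ S ∧ j ∈ S ∧ k ∈ S then z i * z j * z k else 0) := by
      intro S _
      have e0 : ∑ i ∈ S, z i = ∑ i, if i ∈ S then z i else 0 := by
        rw [Finset.sum_ite_mem, Finset.univ_inter]
      rw [e0, srswor_aux_cube]
      refine Finset.sum_congr rfl fun i _ => Finset.sum_congr rfl fun j _ =>
        Finset.sum_congr rfl fun k _ => ?_
      split_ifs with h h1 h2 h3 h4 h5 h6 <;> first | (simp_all) | ring
    rw [Finset.sum_congr rfl e1, Finset.sum_comm]
    have e2 : ∀ i : Fin N,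
        (∑ j ∈ (univ : Finset (Fin N)).powersetCard n, ∑ j_1, ∑ k,
          if i ∈ j ∧ j_1 ∈ j ∧ k ∈ j then z i * z j_1 * z k else 0)
        = ∑ j, ∑ k, ((((univ : Finset (Fin N)).powersetCard n).filter
            (fun S => i ∈ S ∧ j ∈ S ∧ k ∈ S)).card : ℝ) * (z i * z j * z k) := by
      intro i
      rw [Finset.sum_comm]
      refine Finset.sum_congr rfl fun j _ => ?_
      rw [Finset.sum_comm]
      refine Finset.sum_congr rfl fun k _ => ?_
      rw [← Finset.sum_filter, Finset.sum_const, nsmul_eq_mul]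
    rw [Finset.sum_congr rfl (fun i _ => e2 i)]
    have e3 : ∀ i j k : Fin N,
        ((((univ : Finset (Fin N)).powersetCard n).filter
            (fun S => i ∈ S ∧ j ∈ S ∧ k ∈ S)).card : ℝ) * (z i * z j * z k)
        = (A3 + (A2 - A3) * ((if i = j then (1:ℝ) else 0) + (if j = k then (1:ℝ) else 0)
            + (if i = k then (1:ℝ) else 0))
            + (A1 - 3 * A2 + 2 * A3) * ((if i = j then (1:ℝ) else 0)
              * (if j = k then (1:ℝ) else 0)))
            * (z i * z j * z k) := by
      intro i j k
      rw [srswor_aux_c N n hN hn1 i j k]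
    rw [Finset.sum_congr rfl (fun i _ => Finset.sum_congr rfl (fun j _ =>
      Finset.sum_congr rfl (fun k _ => e3 i j k)))]
    exact srswor_aux_eval N z hz A3 (A2 - A3) (A1 - 3 * A2 + 2 * A3)
  -- absorption identities
  have hNn1 : 1 ≤ N := by omega
  have r1 : A1 * (N:ℝ) = (n:ℝ) * CN := by
    have := srswor_absorb N n hn1 hNn1
    have hc : ((N * (N - 1).choose (n - 1) : ℕ) : ℝ) = ((N.choose n * n : ℕ) : ℝ) := by
      exact_mod_cast congrArg Nat.cast this
    push_cast at hc
    rw [hA1, hCN]; linarith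
  have r2 : A2 * ((N:ℝ) - 1) = ((n:ℝ) - 1) * A1 := by
    by_cases h2 : 2 ≤ n
    · have := srswor_absorb (N - 1) (n - 1) (by omega) (by omega)
      have h1 : (N - 1) - 1 = N - 2 := by omega
      have h2' : (n - 1) - 1 = n - 2 := by omega
      rw [h1, h2'] at this
      have hc : (((N - 1) * (N - 2).choose (n - 2) : ℕ) : ℝ)
          = (((N - 1).choose (n - 1) * (n - 1) : ℕ) : ℝ) := by exact_mod_cast congrArg Nat.cast this
      push_cast [Nat.cast_sub (show 1 ≤ N by omega), Nat.cast_sub (show 1 ≤ n by omega)] at hc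
      rw [hA2, if_pos h2, hA1]
      linarith
    · have hn : n = 1 := by omega
      rw [hA2, if_neg h2, hn]
      norm_num
  have r3 : A3 * ((N:ℝ) - 2) = ((n:ℝ) - 2) * A2 := by
    by_cases h3 : 3 ≤ n
    · have := srswor_absorb (N - 2) (n - 2) (by omega) (by omega)
      have h1 : (N - 2) - 1 = N - 3 := by omega
      have h2' : (n - 2) - 1 = n - 3 := by omega
      rw [h1, h2'] at this
      have hc : (((N - 2) * (N - 3).choose (n - 3) : ℕ) : ℝ)
          = (((N - 2).choose (n - 2) * (n - 2) : ℕ) : ℝ) := by exact_mod_cast congrArg Nat.cast this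
      push_cast [Nat.cast_sub (show 2 ≤ N by omega), Nat.cast_sub (show 2 ≤ n by omega)] at hc
      rw [hA3, if_pos h3, hA2, if_pos (by omega : 2 ≤ n)]
      linarith
    · by_cases h2 : 2 ≤ n
      · have hn : n = 2 := by omega
        rw [hA3, if_neg h3, hn]
        norm_num
      · rw [hA3, if_neg h3, hA2, if_neg h2]
        norm_num
  have hK : (A1 - 3 * A2 + 2 * A3) * ((N:ℝ) * (((N:ℝ) - 1) * ((N:ℝ) - 2)))
      = ((N:ℝ) - n) * ((N:ℝ) - 2 * n) * (n:ℝ) * CN := by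
    linear_combination (((N:ℝ) - 1) * ((N:ℝ) - 2) - 3 * ((n:ℝ) - 1) * ((N:ℝ) - 2)
        + 2 * ((n:ℝ) - 1) * ((n:ℝ) - 2)) * r1
      + (-3 * (N:ℝ) * ((N:ℝ) - 2) + 2 * ((n:ℝ) - 2) * (N:ℝ)) * r2
      + (2 * (N:ℝ) * ((N:ℝ) - 1)) * r3
  -- finish
  have hcardP : ((((univ : Finset (Fin N)).powersetCard n).card : ℕ) : ℝ) = CN := by
    rw [card_powersetCard, card_univ, Fintype.card_fin, hCN]
  have hCN0 : CN ≠ 0 := by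
    rw [hCN]
    exact_mod_cast (Nat.choose_pos hnN).ne'
  have hN1 : (N:ℝ) - 1 ≠ 0 := by linarith
  have hN2 : (N:ℝ) - 2 ≠ 0 := by linarith
  rw [Finset.sum_congr rfl hP, ← Finset.sum_div, hsum, hcardP]
  have hS3 : ∑ i, (y i - Ybar) ^ 3 = ∑ i, z i ^ 3 := by
    simp [hzdef]
  rw [hS3]
  field_simp
  linear_combination (∑ i, z i ^ 3) * hK
end

section
/- Under SRSWOR of size n from a population of size N ≥ 4, E((x̄ − X̄)³(z̄ − Z̄)) = L₃·C₀₃₁ + 3L₄·C₀₂₀C₀₁₁, where L₃ = (N−n)(N² + N − 6nN + 6n²)/((N−1)(N−2)(N−3)n³), L₄ = N(N−n)(N−n−1)(n−1)/((N−1)(N−2)(N−3)n³), C₀₃₁ = (1/N)∑(x_i − X̄)³(z_i − Z̄), C₀₂₀ = (1/N)∑(x_i − X̄)², C₀₁₁ = (1/N)∑(x_i − X̄)(z_i − Z̄). -/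
open Finset

section SRSWORAux

variable {N : ℕ}

def D2 (f g : Fin N → ℝ) (s : Finset (Fin N)) : ℝ :=
  ∑ i ∈ s, f i * ∑ j ∈ s.erase i, g j

def D3 (f g h : Fin N → ℝ) (s : Finset (Fin N)) : ℝ :=
  ∑ i ∈ s, f i * ∑ j ∈ s.erase i, g j * ∑ k ∈ (s.erase i).erase j, h k

def D4 (f g h p : Fin N → ℝ) (s : Finset (Fin N)) : ℝ :=
  ∑ i ∈ s, f i * ∑ j ∈ s.erase i, g j * ∑ k ∈ (s.erase i).erase j,
    h k * ∑ l ∈ ((s.erase i).erase j).erase k, p l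

lemma H2 (f g k : Fin N → ℝ) (s : Finset (Fin N)) :
    D2 f g s * (∑ i ∈ s, k i)
      = D2 (fun i => f i * k i) g s + D2 f (fun i => g i * k i) s + D3 f g k s := by
  rw [D2, Finset.sum_mul, D2, D2, D3, ← Finset.sum_add_distrib, ← Finset.sum_add_distrib]
  refine Finset.sum_congr rfl fun i hi => ?_
  have key : ∀ j ∈ s.erase i, (∑ m ∈ s, k m)
      = k i + k j + ∑ m ∈ (s.erase i).erase j, k m := by
    intro j hj
    rw [← Finset.add_sum_erase _ k hi, ← Finset.add_sum_erase _ k hj, add_assoc]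
  have L : (∑ j ∈ s.erase i, g j) * (∑ m ∈ s, k m)
      = ∑ j ∈ s.erase i, g j * (k i + k j + ∑ m ∈ (s.erase i).erase j, k m) := by
    rw [Finset.sum_mul]
    exact Finset.sum_congr rfl fun j hj => by rw [key j hj]
  rw [mul_assoc, L]
  simp only [mul_add, Finset.mul_sum, Finset.sum_add_distrib, Finset.sum_mul]
  have e1 : ∑ x ∈ s.erase i, f i * (g x * k i) = ∑ x ∈ s.erase i, f i * k i * g x :=
    Finset.sum_congr rfl fun x hx => by ring
  rw [e1]

lemma H3 (f g h k : Fin N → ℝ) (s : Finset (Fin N)) :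
    D3 f g h s * (∑ i ∈ s, k i)
      = D3 (fun i => f i * k i) g h s + D3 f (fun i => g i * k i) h s
        + D3 f g (fun i => h i * k i) s + D4 f g h k s := by
  rw [D3, Finset.sum_mul, D3, D3, D3, D4,
    ← Finset.sum_add_distrib, ← Finset.sum_add_distrib, ← Finset.sum_add_distrib]
  refine Finset.sum_congr rfl fun i hi => ?_
  have key : ∀ j ∈ s.erase i, ∀ m ∈ (s.erase i).erase j, (∑ l ∈ s, k l)
      = k i + k j + k m + ∑ l ∈ ((s.erase i).erase j).erase m, k l := by
    intro j hj m hm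
    rw [← Finset.add_sum_erase _ k hi, ← Finset.add_sum_erase _ k hj,
      ← Finset.add_sum_erase _ k hm, add_assoc, add_assoc]
  have L : (∑ j ∈ s.erase i, g j * ∑ m ∈ (s.erase i).erase j, h m) * (∑ l ∈ s, k l)
      = ∑ j ∈ s.erase i, g j * ∑ m ∈ (s.erase i).erase j,
          h m * (k i + k j + k m + ∑ l ∈ ((s.erase i).erase j).erase m, k l) := by
    rw [Finset.sum_mul]
    refine Finset.sum_congr rfl fun j hj => ?_
    rw [mul_assoc, Finset.sum_mul]
    congr 1
    exact Finset.sum_congr rfl fun m hm => by rw [key j hj m hm]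
  rw [mul_assoc, L]
  simp only [mul_add, Finset.mul_sum, Finset.sum_add_distrib, Finset.sum_mul]
  have e1 : ∑ x ∈ s.erase i, ∑ y ∈ (s.erase i).erase x, f i * (g x * (h y * k i))
      = ∑ x ∈ s.erase i, ∑ y ∈ (s.erase i).erase x, f i * k i * (g x * h y) :=
    Finset.sum_congr rfl fun x hx => Finset.sum_congr rfl fun y hy => by ring
  have e2 : ∑ x ∈ s.erase i, ∑ y ∈ (s.erase i).erase x, f i * (g x * (h y * k x))
      = ∑ x ∈ s.erase i, ∑ y ∈ (s.erase i).erase x, f i * (g x * k x * h y) :=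
    Finset.sum_congr rfl fun x hx => Finset.sum_congr rfl fun y hy => by ring
  rw [e1, e2]


lemma H1 (f g : Fin N → ℝ) (s : Finset (Fin N)) :
    (∑ i ∈ s, f i) * (∑ i ∈ s, g i) = (∑ i ∈ s, f i * g i) + D2 f g s := by
  rw [Finset.sum_mul]
  rw [D2, ← Finset.sum_add_distrib]
  refine Finset.sum_congr rfl fun i hi => ?_
  rw [← Finset.add_sum_erase _ g hi, mul_add]

lemma count_sup {N n : ℕ} (T : Finset (Fin N)) (hT : T.card ≤ n) :
    (((univ : Finset (Fin N)).powersetCard n).filter (fun S => T ⊆ S)).card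
      = (N - T.card).choose (n - T.card) := by
  have h1 : (((univ : Finset (Fin N)).powersetCard n).filter (fun S => T ⊆ S)).card
      = ((Tᶜ).powersetCard (n - T.card)).card := by
    apply card_bij' (fun S _ => S \ T) (fun S' _ => S' ∪ T)
    · intro S hS
      simp only [mem_filter, mem_powersetCard] at hS
      obtain ⟨⟨-, hcard⟩, hTS⟩ := hS
      rw [mem_powersetCard]
      constructor
      · intro x hx
        simp only [mem_sdiff] at hx
        simp [mem_compl, hx.2]
      · rw [card_sdiff_of_subset hTS, hcard]
    · intro S' hS'
      rw [mem_powersetCard] at hS'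
      obtain ⟨hsub, hcard⟩ := hS'
      have hdisj : Disjoint S' T := by
        rw [disjoint_iff_inter_eq_empty]
        ext x
        simp only [mem_inter, notMem_empty, iff_false]
        rintro ⟨hx1, hx2⟩
        exact (mem_compl.mp (hsub hx1)) hx2
      simp only [mem_filter, mem_powersetCard]
      refine ⟨⟨subset_univ _, ?_⟩, subset_union_right⟩
      rw [card_union_of_disjoint hdisj, hcard]
      omega
    · intro S hS
      simp only [mem_filter] at hS
      exact sdiff_union_of_subset hS.2
    · intro S' hS'
      rw [mem_powersetCard] at hS'
      have hdisj : Disjoint S' T := by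
        rw [disjoint_iff_inter_eq_empty]
        ext x
        simp only [mem_inter, notMem_empty, iff_false]
        rintro ⟨hx1, hx2⟩
        exact (mem_compl.mp (hS'.1 hx1)) hx2
      exact union_sdiff_cancel_right hdisj
  rw [h1, card_powersetCard, card_compl]
  simp


def cnt (N n m : ℕ) : ℕ := if m ≤ n then (N - m).choose (n - m) else 0

lemma count_sup' (T : Finset (Fin N)) :
    (((univ : Finset (Fin N)).powersetCard n).filter (fun S => T ⊆ S)).card
      = cnt N n T.card := by
  rw [cnt]
  split_ifs with h
  · exact count_sup T h
  · rw [Finset.card_eq_zero, Finset.filter_eq_empty_iff]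
    intro S hS
    rw [mem_powersetCard] at hS
    intro hTS
    exact h ((card_le_card hTS).trans hS.2.le)

lemma sum_ite_subset (T : Finset (Fin N)) (v : ℝ) :
    ∑ S ∈ (univ : Finset (Fin N)).powersetCard n, (if T ⊆ S then v else 0)
      = (cnt N n T.card : ℝ) * v := by
  rw [Finset.sum_ite, Finset.sum_const, Finset.sum_const_zero, add_zero, count_sup',
    nsmul_eq_mul]

lemma SW1 (f : Fin N → ℝ) :
    ∑ S ∈ (univ : Finset (Fin N)).powersetCard n, ∑ i ∈ S, f i
      = (cnt N n 1 : ℝ) * ∑ i, f i := by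
  have step : ∀ S ∈ (univ : Finset (Fin N)).powersetCard n,
      ∑ i ∈ S, f i = ∑ i, (if ({i} : Finset (Fin N)) ⊆ S then f i else 0) := by
    intro S _
    simp only [singleton_subset_iff]
    rw [Finset.sum_ite_mem, univ_inter]
  rw [Finset.sum_congr rfl step, Finset.sum_comm, Finset.mul_sum]
  refine Finset.sum_congr rfl fun i _ => ?_
  rw [sum_ite_subset, card_singleton]

lemma sum_indicator (S : Finset (Fin N)) (F : Fin N → ℝ) :
    ∑ i ∈ S, F i = ∑ i, (if i ∈ S then F i else 0) := by
  rw [Finset.sum_ite_mem, univ_inter]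

lemma erase_inter' (S : Finset (Fin N)) (i : Fin N) :
    (univ.erase i) ∩ S = S.erase i := by ext x; simp [and_comm]

lemma erase_erase_inter (S : Finset (Fin N)) (i j : Fin N) :
    ((univ.erase i).erase j) ∩ S = (S.erase i).erase j := by
  ext x; simp; try tauto

lemma erase3_inter (S : Finset (Fin N)) (i j k : Fin N) :
    (((univ.erase i).erase j).erase k) ∩ S = ((S.erase i).erase j).erase k := by
  ext x; simp; try tauto

lemma SW2 (f g : Fin N → ℝ) :
    ∑ S ∈ (univ : Finset (Fin N)).powersetCard n,
        (∑ i ∈ S, f i * ∑ j ∈ S.erase i, g j)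
      = (cnt N n 2 : ℝ) * ∑ i, f i * ∑ j ∈ univ.erase i, g j := by
  have step : ∀ S ∈ (univ : Finset (Fin N)).powersetCard n,
      (∑ i ∈ S, f i * ∑ j ∈ S.erase i, g j)
        = ∑ i, ∑ j ∈ univ.erase i,
            (if ({i, j} : Finset (Fin N)) ⊆ S then f i * g j else 0) := by
    intro S _
    rw [sum_indicator S (fun i => f i * ∑ j ∈ S.erase i, g j)]
    refine Finset.sum_congr rfl fun i _ => ?_
    by_cases hiS : i ∈ S
    · rw [if_pos hiS, Finset.mul_sum, ← erase_inter' S i, ← Finset.sum_ite_mem]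
      refine Finset.sum_congr rfl fun j _ => ?_
      have hiff : ({i, j} : Finset (Fin N)) ⊆ S ↔ j ∈ S := by
        simp [insert_subset_iff, hiS]
      simp only [hiff]
    · rw [if_neg hiS, eq_comm, Finset.sum_eq_zero]
      intro j _
      rw [if_neg]
      intro hsub
      exact hiS (hsub (by simp))
  rw [Finset.sum_congr rfl step, Finset.sum_comm, Finset.mul_sum]
  refine Finset.sum_congr rfl fun i _ => ?_
  rw [Finset.sum_comm, Finset.mul_sum, Finset.mul_sum]
  refine Finset.sum_congr rfl fun j hj => ?_
  rw [sum_ite_subset]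
  have hji : j ≠ i := Finset.ne_of_mem_erase hj
  rw [card_insert_of_notMem (by simp [hji.symm]), card_singleton]
  try ring

lemma SW3 (f g h : Fin N → ℝ) :
    ∑ S ∈ (univ : Finset (Fin N)).powersetCard n,
        (∑ i ∈ S, f i * ∑ j ∈ S.erase i, g j * ∑ k ∈ (S.erase i).erase j, h k)
      = (cnt N n 3 : ℝ)
        * ∑ i, f i * ∑ j ∈ univ.erase i, g j * ∑ k ∈ (univ.erase i).erase j, h k := by
  have step : ∀ S ∈ (univ : Finset (Fin N)).powersetCard n,
      (∑ i ∈ S, f i * ∑ j ∈ S.erase i, g j * ∑ k ∈ (S.erase i).erase j, h k)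
        = ∑ i, ∑ j ∈ univ.erase i, ∑ k ∈ (univ.erase i).erase j,
            (if ({i, j, k} : Finset (Fin N)) ⊆ S then f i * (g j * h k) else 0) := by
    intro S _
    rw [sum_indicator S (fun i => f i * ∑ j ∈ S.erase i, g j * ∑ k ∈ (S.erase i).erase j, h k)]
    refine Finset.sum_congr rfl fun i _ => ?_
    by_cases hiS : i ∈ S
    · rw [if_pos hiS, Finset.mul_sum, ← erase_inter' S i, ← Finset.sum_ite_mem]
      refine Finset.sum_congr rfl fun j _ => ?_
      by_cases hjS : j ∈ S
      · rw [if_pos hjS, erase_inter' S i]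
        have e1 : f i * (g j * ∑ k ∈ (S.erase i).erase j, h k)
            = ∑ k ∈ (S.erase i).erase j, f i * (g j * h k) := by
          rw [Finset.mul_sum, Finset.mul_sum]
        rw [e1, ← erase_erase_inter S i j, ← Finset.sum_ite_mem]
        refine Finset.sum_congr rfl fun k _ => ?_
        have hiff : ({i, j, k} : Finset (Fin N)) ⊆ S ↔ k ∈ S := by
          simp [insert_subset_iff, hiS, hjS]
        simp only [hiff]
      · rw [if_neg hjS, eq_comm, Finset.sum_eq_zero]
        intro k _
        rw [if_neg]
        intro hsub
        exact hjS (hsub (by simp))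
    · rw [if_neg hiS, eq_comm, Finset.sum_eq_zero]
      intro j _
      rw [eq_comm, Finset.sum_eq_zero]
      intro k _
      rw [if_neg]
      intro hsub
      exact hiS (hsub (by simp))
  rw [Finset.sum_congr rfl step, Finset.sum_comm, Finset.mul_sum]
  refine Finset.sum_congr rfl fun i _ => ?_
  rw [Finset.sum_comm]
  simp only [Finset.mul_sum]
  refine Finset.sum_congr rfl fun j hj => ?_
  rw [Finset.sum_comm]
  refine Finset.sum_congr rfl fun k hk => ?_
  rw [sum_ite_subset]
  have hji : j ≠ i := Finset.ne_of_mem_erase hj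
  have hkj : k ≠ j := Finset.ne_of_mem_erase hk
  have hki : k ≠ i := Finset.ne_of_mem_erase (Finset.mem_of_mem_erase hk)
  rw [show ({i, j, k} : Finset (Fin N)).card = 3 by
    rw [card_insert_of_notMem (by simp [hji.symm, hki.symm]),
      card_insert_of_notMem (by simp [hkj.symm]), card_singleton]]

lemma SW4 (f g h p : Fin N → ℝ) :
    ∑ S ∈ (univ : Finset (Fin N)).powersetCard n,
        (∑ i ∈ S, f i * ∑ j ∈ S.erase i, g j * ∑ k ∈ (S.erase i).erase j,
          h k * ∑ l ∈ ((S.erase i).erase j).erase k, p l)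
      = (cnt N n 4 : ℝ)
        * ∑ i, f i * ∑ j ∈ univ.erase i, g j * ∑ k ∈ (univ.erase i).erase j,
            h k * ∑ l ∈ ((univ.erase i).erase j).erase k, p l := by
  have step : ∀ S ∈ (univ : Finset (Fin N)).powersetCard n,
      (∑ i ∈ S, f i * ∑ j ∈ S.erase i, g j * ∑ k ∈ (S.erase i).erase j,
          h k * ∑ l ∈ ((S.erase i).erase j).erase k, p l)
        = ∑ i, ∑ j ∈ univ.erase i, ∑ k ∈ (univ.erase i).erase j,
            ∑ l ∈ ((univ.erase i).erase j).erase k,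
            (if ({i, j, k, l} : Finset (Fin N)) ⊆ S then f i * (g j * (h k * p l)) else 0) := by
    intro S _
    rw [sum_indicator S (fun i => f i * ∑ j ∈ S.erase i, g j * ∑ k ∈ (S.erase i).erase j,
      h k * ∑ l ∈ ((S.erase i).erase j).erase k, p l)]
    refine Finset.sum_congr rfl fun i _ => ?_
    by_cases hiS : i ∈ S
    · rw [if_pos hiS, Finset.mul_sum, ← erase_inter' S i, ← Finset.sum_ite_mem]
      refine Finset.sum_congr rfl fun j _ => ?_
      by_cases hjS : j ∈ S
      · rw [if_pos hjS, erase_inter' S i]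
        have e1 : f i * (g j * ∑ k ∈ (S.erase i).erase j,
              h k * ∑ l ∈ ((S.erase i).erase j).erase k, p l)
            = ∑ k ∈ (S.erase i).erase j,
                f i * (g j * (h k * ∑ l ∈ ((S.erase i).erase j).erase k, p l)) := by
          rw [Finset.mul_sum, Finset.mul_sum]
        rw [e1, ← erase_erase_inter S i j, ← Finset.sum_ite_mem]
        refine Finset.sum_congr rfl fun k _ => ?_
        by_cases hkS : k ∈ S
        · rw [if_pos hkS, erase_erase_inter S i j]
          have e2 : f i * (g j * (h k * ∑ l ∈ ((S.erase i).erase j).erase k, p l))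
              = ∑ l ∈ ((S.erase i).erase j).erase k, f i * (g j * (h k * p l)) := by
            rw [Finset.mul_sum, Finset.mul_sum, Finset.mul_sum]
          rw [e2, ← erase3_inter S i j k, ← Finset.sum_ite_mem]
          refine Finset.sum_congr rfl fun l _ => ?_
          have hiff : ({i, j, k, l} : Finset (Fin N)) ⊆ S ↔ l ∈ S := by
            simp [insert_subset_iff, hiS, hjS, hkS]
          simp only [hiff]
        · rw [if_neg hkS, eq_comm, Finset.sum_eq_zero]
          intro l _
          rw [if_neg]
          intro hsub
          exact hkS (hsub (by simp))
      · rw [if_neg hjS, eq_comm, Finset.sum_eq_zero]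
        intro k _
        rw [eq_comm, Finset.sum_eq_zero]
        intro l _
        rw [if_neg]
        intro hsub
        exact hjS (hsub (by simp))
    · rw [if_neg hiS, eq_comm, Finset.sum_eq_zero]
      intro j _
      rw [eq_comm, Finset.sum_eq_zero]
      intro k _
      rw [eq_comm, Finset.sum_eq_zero]
      intro l _
      rw [if_neg]
      intro hsub
      exact hiS (hsub (by simp))
  rw [Finset.sum_congr rfl step, Finset.sum_comm, Finset.mul_sum]
  refine Finset.sum_congr rfl fun i _ => ?_
  rw [Finset.sum_comm]
  simp only [Finset.mul_sum]
  refine Finset.sum_congr rfl fun j hj => ?_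
  rw [Finset.sum_comm]
  refine Finset.sum_congr rfl fun k hk => ?_
  rw [Finset.sum_comm]
  refine Finset.sum_congr rfl fun l hl => ?_
  rw [sum_ite_subset]
  have hji : j ≠ i := Finset.ne_of_mem_erase hj
  have hkj : k ≠ j := Finset.ne_of_mem_erase hk
  have hki : k ≠ i := Finset.ne_of_mem_erase (Finset.mem_of_mem_erase hk)
  have hlk : l ≠ k := Finset.ne_of_mem_erase hl
  have hlj : l ≠ j := Finset.ne_of_mem_erase (Finset.mem_of_mem_erase hl)
  have hli : l ≠ i :=
    Finset.ne_of_mem_erase (Finset.mem_of_mem_erase (Finset.mem_of_mem_erase hl))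
  rw [show ({i, j, k, l} : Finset (Fin N)).card = 4 by
    rw [card_insert_of_notMem (by simp [hji.symm, hki.symm, hli.symm]),
      card_insert_of_notMem (by simp [hkj.symm, hlj.symm]),
      card_insert_of_notMem (by simp [hlk.symm]), card_singleton]]

lemma cnt_mul_desc {N n m : ℕ} (hm : m ≤ n) (hnN : n ≤ N) :
    cnt N n m * N.descFactorial m = N.choose n * n.descFactorial m := by
  rw [cnt, if_pos hm, Nat.descFactorial_eq_factorial_mul_choose,
    Nat.descFactorial_eq_factorial_mul_choose]
  calc (N - m).choose (n - m) * (Nat.factorial m * N.choose m)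
      = Nat.factorial m * (N.choose m * (N - m).choose (n - m)) := by ring
    _ = Nat.factorial m * (N.choose n * n.choose m) := by rw [← Nat.choose_mul (n := N) hm]
    _ = N.choose n * (Nat.factorial m * n.choose m) := by ring

lemma desc1 (K : ℕ) : (K.descFactorial 1 : ℝ) = (K : ℝ) := by
  simp

lemma desc2 {K : ℕ} (h : 1 ≤ K) : (K.descFactorial 2 : ℝ) = (K : ℝ) * ((K : ℝ) - 1) := by
  rw [show (2 : ℕ) = 1 + 1 from rfl, Nat.descFactorial_succ, Nat.cast_mul,
    Nat.cast_sub h, desc1]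
  push_cast
  ring

lemma desc3 {K : ℕ} (h : 2 ≤ K) :
    (K.descFactorial 3 : ℝ) = (K : ℝ) * ((K : ℝ) - 1) * ((K : ℝ) - 2) := by
  rw [show (3 : ℕ) = 2 + 1 from rfl, Nat.descFactorial_succ, Nat.cast_mul,
    Nat.cast_sub h, desc2 (by omega : 1 ≤ K)]
  push_cast
  ring

lemma desc4 {K : ℕ} (h : 3 ≤ K) :
    (K.descFactorial 4 : ℝ) = (K : ℝ) * ((K : ℝ) - 1) * ((K : ℝ) - 2) * ((K : ℝ) - 3) := by
  rw [show (4 : ℕ) = 3 + 1 from rfl, Nat.descFactorial_succ, Nat.cast_mul,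
    Nat.cast_sub h, desc3 (by omega : 2 ≤ K)]
  push_cast
  ring

lemma cnt1R {N n : ℕ} (hn1 : 1 ≤ n) (hnN : n ≤ N) :
    (cnt N n 1 : ℝ) * (N : ℝ) = (N.choose n : ℝ) * (n : ℝ) := by
  have h := cnt_mul_desc hn1 hnN
  have h' : (cnt N n 1 : ℝ) * (N.descFactorial 1 : ℝ)
      = (N.choose n : ℝ) * (n.descFactorial 1 : ℝ) := by exact_mod_cast h
  simpa [desc1] using h'

lemma cnt2R {N n : ℕ} (hN : 4 ≤ N) (hn1 : 1 ≤ n) (hnN : n ≤ N) :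
    (cnt N n 2 : ℝ) * ((N : ℝ) * ((N : ℝ) - 1))
      = (N.choose n : ℝ) * ((n : ℝ) * ((n : ℝ) - 1)) := by
  by_cases h : 2 ≤ n
  · have hh := cnt_mul_desc h hnN
    have h' : (cnt N n 2 : ℝ) * (N.descFactorial 2 : ℝ)
        = (N.choose n : ℝ) * (n.descFactorial 2 : ℝ) := by exact_mod_cast hh
    rwa [desc2 (by omega : 1 ≤ N), desc2 (by omega : 1 ≤ n)] at h'
  · have hn : n = 1 := by omega
    subst hn
    rw [cnt, if_neg h]
    norm_num

lemma cnt3R {N n : ℕ} (hN : 4 ≤ N) (hn1 : 1 ≤ n) (hnN : n ≤ N) :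
    (cnt N n 3 : ℝ) * ((N : ℝ) * ((N : ℝ) - 1) * ((N : ℝ) - 2))
      = (N.choose n : ℝ) * ((n : ℝ) * ((n : ℝ) - 1) * ((n : ℝ) - 2)) := by
  by_cases h : 3 ≤ n
  · have hh := cnt_mul_desc h hnN
    have h' : (cnt N n 3 : ℝ) * (N.descFactorial 3 : ℝ)
        = (N.choose n : ℝ) * (n.descFactorial 3 : ℝ) := by exact_mod_cast hh
    rwa [desc3 (by omega : 2 ≤ N), desc3 (by omega : 2 ≤ n)] at h'
  · rw [cnt, if_neg h]
    interval_cases n <;> norm_num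

lemma cnt4R {N n : ℕ} (hN : 4 ≤ N) (hn1 : 1 ≤ n) (hnN : n ≤ N) :
    (cnt N n 4 : ℝ) * ((N : ℝ) * ((N : ℝ) - 1) * ((N : ℝ) - 2) * ((N : ℝ) - 3))
      = (N.choose n : ℝ) * ((n : ℝ) * ((n : ℝ) - 1) * ((n : ℝ) - 2) * ((n : ℝ) - 3)) := by
  by_cases h : 4 ≤ n
  · have hh := cnt_mul_desc h hnN
    have h' : (cnt N n 4 : ℝ) * (N.descFactorial 4 : ℝ)
        = (N.choose n : ℝ) * (n.descFactorial 4 : ℝ) := by exact_mod_cast hh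
    rwa [desc4 (by omega : 3 ≤ N), desc4 (by omega : 3 ≤ n)] at h'
  · rw [cnt, if_neg h]
    interval_cases n <;> norm_num

end SRSWORAux

section MainProof

variable {N n : ℕ}

lemma SW1' (f : Fin N → ℝ) :
    ∑ S ∈ (univ : Finset (Fin N)).powersetCard n, ∑ i ∈ S, f i
      = (cnt N n 1 : ℝ) * ∑ i, f i := SW1 f

lemma SW2' (f g : Fin N → ℝ) :
    ∑ S ∈ (univ : Finset (Fin N)).powersetCard n, D2 f g S
      = (cnt N n 2 : ℝ) * D2 f g univ := by
  simp only [D2]; exact SW2 f g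

lemma SW3' (f g h : Fin N → ℝ) :
    ∑ S ∈ (univ : Finset (Fin N)).powersetCard n, D3 f g h S
      = (cnt N n 3 : ℝ) * D3 f g h univ := by
  simp only [D3]; exact SW3 f g h

lemma SW4' (f g h p : Fin N → ℝ) :
    ∑ S ∈ (univ : Finset (Fin N)).powersetCard n, D4 f g h p S
      = (cnt N n 4 : ℝ) * D4 f g h p univ := by
  simp only [D4]; exact SW4 f g h p

lemma expand4 (a b : Fin N → ℝ) (s : Finset (Fin N)) :
    (∑ i ∈ s, a i) ^ 3 * (∑ i ∈ s, b i)
      = (∑ i ∈ s, a i * a i * a i * b i)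
        + (D2 (fun i => a i * a i * a i) b s
          + 2 * D2 (fun i => a i * a i * b i) (fun i => a i) s
          + 2 * D2 (fun i => a i * a i) (fun i => a i * b i) s
          + D2 (fun i => a i * b i) (fun i => a i * a i) s
          + D2 (fun i => a i) (fun i => a i * a i * b i) s)
        + (2 * D3 (fun i => a i * a i) (fun i => a i) b s
          + D3 (fun i => a i) (fun i => a i * a i) b s
          + D3 (fun i => a i * b i) (fun i => a i) (fun i => a i) s
          + D3 (fun i => a i) (fun i => a i * b i) (fun i => a i) s
          + D3 (fun i => a i) (fun i => a i) (fun i => a i * b i) s)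
        + D4 (fun i => a i) (fun i => a i) (fun i => a i) b s := by
  have e2 := H1 a a s
  have e3a := H1 (fun i => a i * a i) a s
  have e3b := H2 a a a s
  have e4a := H1 (fun i => a i * a i * a i) b s
  have e4b := H2 (fun i => a i * a i) a b s
  have e4c := H2 a (fun i => a i * a i) b s
  have e4d := H3 a a a b s
  beta_reduce at e2 e3a e3b e4a e4b e4c e4d ⊢
  linear_combination ((∑ i ∈ s, a i) * (∑ i ∈ s, b i)) * e2 + (∑ i ∈ s, b i) * e3a
    + (∑ i ∈ s, b i) * e3b + e4a + 2 * e4b + e4c + e4d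

end MainProof

lemma vD2 {N : ℕ} (f g : Fin N → ℝ) :
    D2 f g univ = (∑ i, f i) * (∑ i, g i) - ∑ i, f i * g i := by
  linear_combination (-1 : ℝ) * H1 f g univ

lemma vD3 {N : ℕ} (f g k : Fin N → ℝ) :
    D3 f g k univ = D2 f g univ * (∑ i, k i)
      - D2 (fun i => f i * k i) g univ - D2 f (fun i => g i * k i) univ := by
  linear_combination (-1 : ℝ) * H2 f g k univ

lemma vD4 {N : ℕ} (f g h k : Fin N → ℝ) :
    D4 f g h k univ = D3 f g h univ * (∑ i, k i)
      - D3 (fun i => f i * k i) g h univ - D3 f (fun i => g i * k i) h univ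
      - D3 f g (fun i => h i * k i) univ := by
  linear_combination (-1 : ℝ) * H3 f g h k univ

set_option maxHeartbeats 4000000

/-- Under SRSWOR of size `n` from a population of size `N ≥ 4`,
`E((x̄ − X̄)³(z̄ − Z̄)) = L₃·C₀₃₁ + 3L₄·C₀₂₀C₀₁₁`, where
`L₃ = (N−n)(N² + N − 6nN + 6n²)/((N−1)(N−2)(N−3)n³)`,
`L₄ = N(N−n)(N−n−1)(n−1)/((N−1)(N−2)(N−3)n³)` and `C₀₃₁, C₀₂₀, C₀₁₁` are the
population mixed central moments. -/
theorem srswor_fourth_mixed_moment (N n : ℕ) (hN : 4 ≤ N) (hn1 : 1 ≤ n) (hnN : n ≤ N)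
    (x z : Fin N → ℝ) (Xbar Zbar : ℝ)
    (hXbar : Xbar = (∑ i, x i) / (N : ℝ)) (hZbar : Zbar = (∑ i, z i) / (N : ℝ)) :
    (∑ S ∈ (univ : Finset (Fin N)).powersetCard n,
        ((∑ i ∈ S, x i) / (n : ℝ) - Xbar) ^ 3 * ((∑ i ∈ S, z i) / (n : ℝ) - Zbar)) /
      (((univ : Finset (Fin N)).powersetCard n).card : ℝ)
      = (((N : ℝ) - n) * ((N : ℝ) ^ 2 + N - 6 * n * N + 6 * (n : ℝ) ^ 2))
          / ((((N : ℝ) - 1) * ((N : ℝ) - 2) * ((N : ℝ) - 3)) * (n : ℝ) ^ 3) *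
          ((∑ i, (x i - Xbar) ^ 3 * (z i - Zbar)) / (N : ℝ))
        + 3 * ((N : ℝ) * ((N : ℝ) - n) * ((N : ℝ) - n - 1) * ((n : ℝ) - 1)
          / ((((N : ℝ) - 1) * ((N : ℝ) - 2) * ((N : ℝ) - 3)) * (n : ℝ) ^ 3)) *
          (((∑ i, (x i - Xbar) ^ 2) / (N : ℝ)) *
            ((∑ i, (x i - Xbar) * (z i - Zbar)) / (N : ℝ))) := by
  have hNr : (4 : ℝ) ≤ (N : ℝ) := by exact_mod_cast hN
  have hN0 : (N : ℝ) ≠ 0 := by linarith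
  have hN1 : (N : ℝ) - 1 ≠ 0 := by linarith
  have hN2 : (N : ℝ) - 2 ≠ 0 := by linarith
  have hN3 : (N : ℝ) - 3 ≠ 0 := by linarith
  have hnr : (1 : ℝ) ≤ (n : ℝ) := by exact_mod_cast hn1
  have hn0 : (n : ℝ) ≠ 0 := by linarith
  set a : Fin N → ℝ := fun i => x i - Xbar with ha_def
  set b : Fin N → ℝ := fun i => z i - Zbar with hb_def
  have ha : (∑ i, a i) = 0 := by
    simp only [ha_def, Finset.sum_sub_distrib, Finset.sum_const, card_univ,
      Fintype.card_fin, nsmul_eq_mul, hXbar]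
    field_simp
    ring
  have hb : (∑ i, b i) = 0 := by
    simp only [hb_def, Finset.sum_sub_distrib, Finset.sum_const, card_univ,
      Fintype.card_fin, nsmul_eq_mul, hZbar]
    field_simp
    ring
  have hsummand : ∀ S ∈ (univ : Finset (Fin N)).powersetCard n,
      ((∑ i ∈ S, x i) / (n : ℝ) - Xbar) ^ 3 * ((∑ i ∈ S, z i) / (n : ℝ) - Zbar)
        = ((∑ i ∈ S, a i) ^ 3 * (∑ i ∈ S, b i)) / (n : ℝ) ^ 4 := by
    intro S hS
    have hcard : S.card = n := (mem_powersetCard.mp hS).2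
    have hA : (∑ i ∈ S, x i) / (n : ℝ) - Xbar = (∑ i ∈ S, a i) / (n : ℝ) := by
      rw [ha_def]
      rw [Finset.sum_sub_distrib, Finset.sum_const, hcard, nsmul_eq_mul]
      field_simp
    have hB : (∑ i ∈ S, z i) / (n : ℝ) - Zbar = (∑ i ∈ S, b i) / (n : ℝ) := by
      rw [hb_def]
      rw [Finset.sum_sub_distrib, Finset.sum_const, hcard, nsmul_eq_mul]
      field_simp
    rw [hA, hB, div_pow, div_mul_div_comm, ← pow_succ]
  rw [Finset.sum_congr rfl hsummand, ← Finset.sum_div]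
  rw [Finset.sum_congr rfl (fun S _ => expand4 a b S)]
  rw [card_powersetCard, card_univ, Fintype.card_fin]
  simp only [Finset.sum_add_distrib, ← Finset.mul_sum]
  rw [SW1', SW2', SW2', SW2', SW2', SW2', SW3', SW3', SW3', SW3', SW3', SW4']
  simp only [vD4, vD3, vD2]
  simp only [ha, hb, mul_zero, zero_mul, sub_zero, zero_sub, sub_neg_eq_add, neg_neg]
  have r31 : (∑ i, (x i - Xbar) ^ 3 * (z i - Zbar)) = ∑ i, a i * a i * a i * b i :=
    Finset.sum_congr rfl fun i _ => by simp only [ha_def, hb_def]; try ring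
  have r20 : (∑ i, (x i - Xbar) ^ 2) = ∑ i, a i * a i :=
    Finset.sum_congr rfl fun i _ => by simp only [ha_def]; try ring
  have r11 : (∑ i, (x i - Xbar) * (z i - Zbar)) = ∑ i, a i * b i :=
    Finset.sum_congr rfl fun i _ => by simp only [ha_def, hb_def]; try ring
  have s1 : (∑ i, a i * a i * b i * a i) = ∑ i, a i * a i * a i * b i :=
    Finset.sum_congr rfl fun i _ => by ring
  have s2 : (∑ i, a i * a i * (a i * b i)) = ∑ i, a i * a i * a i * b i :=
    Finset.sum_congr rfl fun i _ => by ring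
  have s3 : (∑ i, a i * b i * (a i * a i)) = ∑ i, a i * a i * a i * b i :=
    Finset.sum_congr rfl fun i _ => by ring
  have s4 : (∑ i, a i * (a i * a i * b i)) = ∑ i, a i * a i * a i * b i :=
    Finset.sum_congr rfl fun i _ => by ring
  have s5 : (∑ i, a i * b i * a i * a i) = ∑ i, a i * a i * a i * b i :=
    Finset.sum_congr rfl fun i _ => by ring
  have s6 : (∑ i, a i * (a i * b i * a i)) = ∑ i, a i * a i * a i * b i :=
    Finset.sum_congr rfl fun i _ => by ring
  have s7 : (∑ i, a i * (a i * b i) * a i) = ∑ i, a i * a i * a i * b i :=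
    Finset.sum_congr rfl fun i _ => by ring
  have s8 : (∑ i, a i * (a i * (a i * b i))) = ∑ i, a i * a i * a i * b i :=
    Finset.sum_congr rfl fun i _ => by ring
  rw [r31, r20, r11, s1, s2, s3, s4, s5, s6, s7, s8]
  have hC0 : ((N.choose n : ℕ) : ℝ) ≠ 0 := by
    exact_mod_cast (Nat.choose_pos hnN).ne'
  have e1 : (cnt N n 1 : ℝ) = (N.choose n : ℝ) * (n : ℝ) / (N : ℝ) := by
    rw [eq_div_iff hN0]; exact cnt1R hn1 hnN
  have e2 : (cnt N n 2 : ℝ)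
      = (N.choose n : ℝ) * ((n : ℝ) * ((n : ℝ) - 1)) / ((N : ℝ) * ((N : ℝ) - 1)) := by
    rw [eq_div_iff (mul_ne_zero hN0 hN1)]; exact cnt2R hN hn1 hnN
  have e3 : (cnt N n 3 : ℝ)
      = (N.choose n : ℝ) * ((n : ℝ) * ((n : ℝ) - 1) * ((n : ℝ) - 2))
        / ((N : ℝ) * ((N : ℝ) - 1) * ((N : ℝ) - 2)) := by
    rw [eq_div_iff (mul_ne_zero (mul_ne_zero hN0 hN1) hN2)]; exact cnt3R hN hn1 hnN
  have e4 : (cnt N n 4 : ℝ)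
      = (N.choose n : ℝ) * ((n : ℝ) * ((n : ℝ) - 1) * ((n : ℝ) - 2) * ((n : ℝ) - 3))
        / ((N : ℝ) * ((N : ℝ) - 1) * ((N : ℝ) - 2) * ((N : ℝ) - 3)) := by
    rw [eq_div_iff (mul_ne_zero (mul_ne_zero (mul_ne_zero hN0 hN1) hN2) hN3)]
    exact cnt4R hN hn1 hnN
  rw [e1, e2, e3, e4]
  field_simp
  ring
end

section
/- Under SRSWOR of size n from a population of size N ≥ 3 with two variables x and z, E((x̄ − X̄)²(z̄ − Z̄)) = ((N−n)(N−2n))/((N−1)(N−2)n²) · C₀₂₁, where C₀₂₁ = (1/N)∑_{i=1}^N (x_i − X̄)²(z_i − Z̄). -/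
open Finset

def wcard (N n m : ℕ) : ℕ := if m ≤ n then (N - m).choose (n - m) else 0

lemma count_superset {N n : ℕ} (T : Finset (Fin N)) (h : T.card ≤ n) :
    (((univ : Finset (Fin N)).powersetCard n).filter (fun S => T ⊆ S)).card
      = (N - T.card).choose (n - T.card) := by
  have key : (((univ : Finset (Fin N)).powersetCard n).filter (fun S => T ⊆ S)).card
      = ((univ \ T).powersetCard (n - T.card)).card := by
    apply card_nbij' (fun S => S \ T) (fun U => U ∪ T)
    · intro S hS
      simp only [mem_coe, mem_filter, mem_powersetCard] at hS
      obtain ⟨⟨hsub, hcard⟩, hTS⟩ := hS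
      simp only [mem_coe, mem_powersetCard]
      constructor
      · exact sdiff_subset_sdiff hsub (le_refl T)
      · rw [card_sdiff_of_subset hTS, hcard]
    · intro U hU
      rw [mem_coe, mem_powersetCard, subset_sdiff] at hU
      obtain ⟨⟨hUsub, hdisj⟩, hUcard⟩ := hU
      simp only [mem_coe, mem_filter, mem_powersetCard]
      refine ⟨⟨subset_univ _, ?_⟩, subset_union_right⟩
      rw [card_union_of_disjoint hdisj, hUcard]
      omega
    · intro S hS
      simp only [mem_coe, mem_filter] at hS
      exact sdiff_union_of_subset hS.2
    · intro U hU
      rw [mem_coe, mem_powersetCard, subset_sdiff] at hU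
      beta_reduce
      rw [union_sdiff_right, sdiff_eq_self_of_disjoint hU.1.2]
  rw [key, card_powersetCard, card_sdiff_of_subset (subset_univ T), card_univ, Fintype.card_fin]

lemma count_superset_zero {N n : ℕ} (T : Finset (Fin N)) (h : n < T.card) :
    (((univ : Finset (Fin N)).powersetCard n).filter (fun S => T ⊆ S)).card = 0 := by
  rw [card_eq_zero, filter_eq_empty_iff]
  intro S hS hTS
  rw [mem_powersetCard] at hS
  have := card_le_card hTS
  omega

lemma count_eq_wcard {N n : ℕ} (T : Finset (Fin N)) :
    (((univ : Finset (Fin N)).powersetCard n).filter (fun S => T ⊆ S)).card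
      = wcard N n T.card := by
  unfold wcard
  split
  · exact count_superset T (by assumption)
  · exact count_superset_zero T (by omega)

lemma weight_formula {N n : ℕ} (i j k : Fin N) :
    ((((univ : Finset (Fin N)).powersetCard n).filter
        (fun S => ({i, j, k} : Finset (Fin N)) ⊆ S)).card : ℝ)
      = (wcard N n 3 : ℝ)
        + ((wcard N n 2 : ℝ) - (wcard N n 3 : ℝ)) * ((if i = j then (1:ℝ) else 0)
            + (if i = k then 1 else 0) + (if j = k then 1 else 0))
        + ((wcard N n 1 : ℝ) - 3 * (wcard N n 2 : ℝ) + 2 * (wcard N n 3 : ℝ))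
            * (if i = j ∧ j = k then 1 else 0) := by
  rw [count_eq_wcard]
  by_cases hij : i = j <;> by_cases hik : i = k <;> by_cases hjk : j = k
  · subst hij; subst hjk
    have hc : ({i, i, i} : Finset (Fin N)).card = 1 := by simp
    rw [hc]; simp
    all_goals ring
  · exact absurd (hij ▸ hik) hjk
  · exact absurd (hij.trans hjk) hik
  · subst hij
    have hc : ({i, i, k} : Finset (Fin N)).card = 2 := by simp [hik]
    rw [hc]; simp [hik, hjk]
    all_goals ring
  · exact absurd (hik.trans hjk.symm) hij
  · subst hik
    have hc : ({i, j, i} : Finset (Fin N)).card = 2 := by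
      have : ({i, j, i} : Finset (Fin N)) = {i, j} := by ext t; simp; tauto
      rw [this]; exact card_pair hij
    rw [hc]; simp [hij, hjk]
    all_goals ring
  · subst hjk
    have hc : ({i, j, j} : Finset (Fin N)).card = 2 := by simp [hij]
    rw [hc]; simp [hij, hik]
    all_goals ring
  · have hc : ({i, j, k} : Finset (Fin N)).card = 3 := by
      rw [card_insert_of_notMem (by simp [hij, hik]),
        card_insert_of_notMem (by simp [hjk]), card_singleton]
    rw [hc]; simp [hij, hik, hjk]

lemma triple_expand {N n : ℕ} (a b : Fin N → ℝ) :
    ∑ S ∈ (univ : Finset (Fin N)).powersetCard n, (∑ i ∈ S, a i) ^ 2 * (∑ i ∈ S, b i)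
      = ∑ i, ∑ j, ∑ k, (a i * a j * b k) *
          ((((univ : Finset (Fin N)).powersetCard n).filter
              (fun S => ({i, j, k} : Finset (Fin N)) ⊆ S)).card : ℝ) := by
  have step1 : ∀ S : Finset (Fin N),
      (∑ i ∈ S, a i) ^ 2 * (∑ i ∈ S, b i)
        = ∑ i, ∑ j, ∑ k, if ({i, j, k} : Finset (Fin N)) ⊆ S then a i * a j * b k else 0 := by
    intro S
    have hA : (∑ i ∈ S, a i) = ∑ i, if i ∈ S then a i else 0 := by
      rw [sum_ite_mem, univ_inter]
    have hB : (∑ i ∈ S, b i) = ∑ i, if i ∈ S then b i else 0 := by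
      rw [sum_ite_mem, univ_inter]
    rw [hA, hB, sq, sum_mul_sum]
    rw [sum_mul]
    refine sum_congr rfl fun i _ => ?_
    rw [sum_mul]
    refine sum_congr rfl fun j _ => ?_
    rw [mul_sum]
    refine sum_congr rfl fun k _ => ?_
    by_cases hi : i ∈ S <;> by_cases hj : j ∈ S <;> by_cases hk : k ∈ S <;>
      simp [hi, hj, hk, insert_subset_iff]
  calc ∑ S ∈ (univ : Finset (Fin N)).powersetCard n, (∑ i ∈ S, a i) ^ 2 * (∑ i ∈ S, b i)
      = ∑ S ∈ (univ : Finset (Fin N)).powersetCard n,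
          ∑ i, ∑ j, ∑ k, if ({i, j, k} : Finset (Fin N)) ⊆ S then a i * a j * b k else 0 :=
        sum_congr rfl fun S _ => step1 S
    _ = _ := by
        rw [Finset.sum_comm]
        refine sum_congr rfl fun i _ => ?_
        rw [Finset.sum_comm]
        refine sum_congr rfl fun j _ => ?_
        rw [Finset.sum_comm]
        refine sum_congr rfl fun k _ => ?_
        rw [← sum_filter, sum_const, nsmul_eq_mul, mul_comm]

lemma delta_sum_eval {N : ℕ} (a b : Fin N → ℝ) (w1 w2 w3 : ℝ)
    (ha : ∑ i, a i = 0) (hb : ∑ i, b i = 0) (W : Fin N → Fin N → Fin N → ℝ)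
    (hW : ∀ i j k, W i j k = w3 + (w2 - w3) * ((if i = j then (1:ℝ) else 0)
        + (if i = k then 1 else 0) + (if j = k then 1 else 0))
      + (w1 - 3*w2 + 2*w3) * (if i = j ∧ j = k then 1 else 0)) :
    ∑ i, ∑ j, ∑ k, (a i * a j * b k) * W i j k
      = (w1 - 3*w2 + 2*w3) * ∑ i, a i * a i * b i := by
  have key : ∀ i j k : Fin N, (a i * a j * b k) * W i j k
      = w3 * (a i * a j * b k)
        + (w2 - w3) * ((if i = j then a i * a j * b k else 0)
            + (if i = k then a i * a j * b k else 0)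
            + (if j = k then a i * a j * b k else 0))
        + (w1 - 3*w2 + 2*w3) * (if i = j ∧ j = k then a i * a j * b k else 0) := by
    intro i j k
    rw [hW]
    split_ifs <;> ring
  simp only [key, sum_add_distrib, ← mul_sum]
  have e1 : ∑ i : Fin N, ∑ j : Fin N, ∑ k : Fin N,
      (if i = j then a i * a j * b k else 0) = 0 := by
    refine sum_eq_zero fun i _ => ?_
    refine sum_eq_zero fun j _ => ?_
    split <;> simp [← mul_sum, hb]
  have e2 : ∑ i : Fin N, ∑ j : Fin N, ∑ k : Fin N,
      (if i = k then a i * a j * b k else 0) = 0 := by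
    refine sum_eq_zero fun i _ => ?_
    have h : ∀ j : Fin N, (∑ k, if i = k then a i * a j * b k else 0) = a i * a j * b i := by
      intro j; simp [Finset.sum_ite_eq]
    simp only [h]
    rw [show ∑ j, a i * a j * b i = a i * (∑ j, a j) * b i from by rw [mul_sum, sum_mul]]
    rw [ha]; ring
  have e3 : ∑ i : Fin N, ∑ j : Fin N, ∑ k : Fin N,
      (if j = k then a i * a j * b k else 0) = 0 := by
    have h : ∀ i j : Fin N, (∑ k, if j = k then a i * a j * b k else 0) = a i * a j * b j := by
      intro i j; simp [Finset.sum_ite_eq]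
    simp only [h]
    rw [show ∑ i : Fin N, ∑ j, a i * a j * b j = (∑ i, a i) * ∑ j, a j * b j from by
      rw [sum_mul]; exact sum_congr rfl fun i _ => by rw [mul_sum]; exact sum_congr rfl fun j _ => by ring]
    rw [ha]; ring
  have e4 : ∑ i : Fin N, ∑ j : Fin N, ∑ k : Fin N,
      (if i = j ∧ j = k then a i * a j * b k else 0) = ∑ i, a i * a i * b i := by
    refine sum_congr rfl fun i _ => ?_
    have h : ∀ j : Fin N, (∑ k, if i = j ∧ j = k then a i * a j * b k else 0)
        = if i = j then a i * a j * b j else 0 := by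
      intro j
      simp only [ite_and]
      split <;> simp [Finset.sum_ite_eq]
    simp only [h]
    simp [Finset.sum_ite_eq]
  simp only [hb, mul_zero, sum_const_zero, e1, e2, e3, e4]
  ring

lemma choose_rec (M m : ℕ) (hm : 1 ≤ m) (hM : 1 ≤ M) :
    m * M.choose m = M * (M - 1).choose (m - 1) := by
  obtain ⟨M', rfl⟩ : ∃ M', M = M' + 1 := ⟨M - 1, by omega⟩
  obtain ⟨m', rfl⟩ : ∃ m', m = m' + 1 := ⟨m - 1, by omega⟩
  simp only [Nat.add_sub_cancel]
  rw [mul_comm]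
  exact (Nat.add_one_mul_choose_eq M' m').symm

lemma wc1 (N n : ℕ) (hN : 3 ≤ N) (hn1 : 1 ≤ n) (hnN : n ≤ N) :
    ((n : ℝ)) * (N.choose n : ℝ) = (N : ℝ) * (wcard N n 1 : ℝ) := by
  have h1 : wcard N n 1 = (N - 1).choose (n - 1) := by simp [wcard, hn1]
  have key := choose_rec N n hn1 (by omega)
  rw [h1]
  exact_mod_cast key

lemma wc2 (N n : ℕ) (hN : 3 ≤ N) (hn1 : 1 ≤ n) (hnN : n ≤ N) :
    ((n : ℝ) - 1) * (wcard N n 1 : ℝ) = ((N : ℝ) - 1) * (wcard N n 2 : ℝ) := by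
  rcases Nat.lt_or_ge n 2 with h | h
  · have hn : n = 1 := by omega
    subst hn
    simp [wcard]
  · have h1 : wcard N n 1 = (N - 1).choose (n - 1) := by simp [wcard, hn1]
    have h2 : wcard N n 2 = (N - 2).choose (n - 2) := by simp [wcard, h]
    have key := choose_rec (N - 1) (n - 1) (by omega) (by omega)
    rw [show N - 1 - 1 = N - 2 by omega, show n - 1 - 1 = n - 2 by omega] at key
    rw [h1, h2]
    have := congrArg (Nat.cast : ℕ → ℝ) key
    push_cast at this
    rw [Nat.cast_sub (by omega : 1 ≤ n), Nat.cast_sub (by omega : 1 ≤ N)] at this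
    push_cast at this
    linarith [this]

lemma wc3 (N n : ℕ) (hN : 3 ≤ N) (hn1 : 1 ≤ n) (hnN : n ≤ N) :
    ((n : ℝ) - 2) * (wcard N n 2 : ℝ) = ((N : ℝ) - 2) * (wcard N n 3 : ℝ) := by
  rcases Nat.lt_or_ge n 3 with h | h
  · have h3 : wcard N n 3 = 0 := by simp [wcard]; omega
    rcases Nat.lt_or_ge n 2 with h' | h'
    · have hn : n = 1 := by omega
      subst hn
      have h2 : wcard N 1 2 = 0 := by simp [wcard]
      rw [h2, h3]; norm_num
    · have hn : n = 2 := by omega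
      subst hn
      rw [h3]; norm_num
  · have h2 : wcard N n 2 = (N - 2).choose (n - 2) := by simp [wcard]; omega
    have h3 : wcard N n 3 = (N - 3).choose (n - 3) := by simp [wcard, h]
    have key := choose_rec (N - 2) (n - 2) (by omega) (by omega)
    rw [show N - 2 - 1 = N - 3 by omega, show n - 2 - 1 = n - 3 by omega] at key
    rw [h2, h3]
    have := congrArg (Nat.cast : ℕ → ℝ) key
    rw [Nat.cast_mul, Nat.cast_mul, Nat.cast_sub (by omega : 2 ≤ n),
      Nat.cast_sub (by omega : 2 ≤ N)] at this
    push_cast at this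
    linarith [this]

/-- Under SRSWOR of size `n` from a population of size `N ≥ 3` with variables `x, z`,
`E((x̄ − X̄)²(z̄ − Z̄)) = ((N−n)(N−2n))/((N−1)(N−2)n²) · C₀₂₁`, where
`C₀₂₁ = (1/N)∑ (xᵢ − X̄)²(zᵢ − Z̄)`. -/
theorem srswor_mixed_third_moment (N n : ℕ) (hN : 3 ≤ N) (hn1 : 1 ≤ n) (hnN : n ≤ N)
    (x z : Fin N → ℝ) (Xbar Zbar : ℝ)
    (hXbar : Xbar = (∑ i, x i) / (N : ℝ)) (hZbar : Zbar = (∑ i, z i) / (N : ℝ)) :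
    (∑ S ∈ (univ : Finset (Fin N)).powersetCard n,
        ((∑ i ∈ S, x i) / (n : ℝ) - Xbar) ^ 2 * ((∑ i ∈ S, z i) / (n : ℝ) - Zbar)) /
      (((univ : Finset (Fin N)).powersetCard n).card : ℝ)
      = (((N : ℝ) - n) * ((N : ℝ) - 2 * n)) / ((((N : ℝ) - 1) * ((N : ℝ) - 2)) * (n : ℝ) ^ 2) *
          ((∑ i, (x i - Xbar) ^ 2 * (z i - Zbar)) / (N : ℝ)) := by
  have hNne : (N : ℝ) ≠ 0 := Nat.cast_ne_zero.mpr (by omega)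
  have hnne : (n : ℝ) ≠ 0 := Nat.cast_ne_zero.mpr (by omega)
  set a : Fin N → ℝ := fun i => x i - Xbar with ha_def
  set b : Fin N → ℝ := fun i => z i - Zbar with hb_def
  have ha0 : ∑ i, a i = 0 := by
    simp only [ha_def, sum_sub_distrib, sum_const, card_univ, Fintype.card_fin, nsmul_eq_mul,
      hXbar]
    field_simp
    ring
  have hb0 : ∑ i, b i = 0 := by
    simp only [hb_def, sum_sub_distrib, sum_const, card_univ, Fintype.card_fin, nsmul_eq_mul,
      hZbar]
    field_simp
    ring
  have hstep : ∀ S ∈ (univ : Finset (Fin N)).powersetCard n,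
      ((∑ i ∈ S, x i) / (n : ℝ) - Xbar) ^ 2 * ((∑ i ∈ S, z i) / (n : ℝ) - Zbar)
        = ((∑ i ∈ S, a i) ^ 2 * (∑ i ∈ S, b i)) / (n : ℝ) ^ 3 := by
    intro S hS
    rw [mem_powersetCard] at hS
    have hx : ∑ i ∈ S, a i = (∑ i ∈ S, x i) - n * Xbar := by
      simp [ha_def, sum_sub_distrib, hS.2]
    have hz : ∑ i ∈ S, b i = (∑ i ∈ S, z i) - n * Zbar := by
      simp [hb_def, sum_sub_distrib, hS.2]
    rw [hx, hz]
    field_simp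
  rw [sum_congr rfl hstep, ← sum_div, triple_expand,
    delta_sum_eval a b (wcard N n 1) (wcard N n 2) (wcard N n 3) ha0 hb0 _
      (fun i j k => weight_formula i j k)]
  have hcardP : ((((univ : Finset (Fin N)).powersetCard n).card : ℕ) : ℝ) = (N.choose n : ℝ) := by
    rw [card_powersetCard, card_univ, Fintype.card_fin]
  rw [hcardP]
  have hC : ∑ i, a i * a i * b i = ∑ i, (x i - Xbar) ^ 2 * (z i - Zbar) := by
    refine sum_congr rfl fun i _ => ?_
    simp only [ha_def, hb_def]
    ring
  rw [hC]
  -- final scalar arithmetic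
  have e1 := wc1 N n hN hn1 hnN
  have e2 := wc2 N n hN hn1 hnN
  have e3 := wc3 N n hN hn1 hnN
  have hkne : (N.choose n : ℝ) ≠ 0 := Nat.cast_ne_zero.mpr (Nat.choose_pos hnN).ne'
  have hN3 : (3 : ℝ) ≤ (N : ℝ) := by exact_mod_cast hN
  have hN1 : (N : ℝ) - 1 ≠ 0 := by nlinarith
  have hN2 : (N : ℝ) - 2 ≠ 0 := by nlinarith
  set C := ∑ i, (x i - Xbar) ^ 2 * (z i - Zbar)
  set u := (wcard N n 1 : ℝ)
  set v := (wcard N n 2 : ℝ)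
  set w := (wcard N n 3 : ℝ)
  set k := (N.choose n : ℝ)
  have hkey : (u - 3*v + 2*w) * ((N:ℝ) * (((N:ℝ)-1) * ((N:ℝ)-2)))
      = (((N:ℝ)-n) * ((N:ℝ)-2*n)) * ((n:ℝ) * k) := by
    linear_combination (-(((N:ℝ)-n) * ((N:ℝ)-2*n))) * e1
      + ((N:ℝ)*(3*(N:ℝ)-2*(n:ℝ)-2)) * e2 + (-2*(N:ℝ)*((N:ℝ)-1)) * e3
  field_simp
  linear_combination C * hkey
end
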